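/- Every euclidean lattice of rank 3 is of Voronoi's first kind: for every discrete ℤ-submodule L spanning a 3-dimensional real inner product space E, there exist vectors v₀, v₁, v₂, v₃ ∈ L such that (v₁, v₂, v₃) is a ℤ-basis of L, v₀ + v₁ + v₂ + v₃ = 0, and ⟨v_i, v_j⟩ ≤ 0 for all i ≠ j. -/

import Mathlib

open Module Finset

@[simp] private lemma finSucc0 : Fin.succ (0 : Fin 3) = 1 := rfl
@[simp] private lemma finSucc1 : Fin.succ (1 : Fin 3) = 2 := rfl
@[simp] private lemma finSucc2 : Fin.succ (2 : Fin 3) = 3 := rfl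

section SellingAux

variable {E : Type*} [NormedAddCommGroup E] [InnerProductSpace ℝ E]
  [FiniteDimensional ℝ E] (L : Submodule ℤ E)

/-- Superbase predicate. -/
def IsSb (v : Fin 4 → E) : Prop :=
  (∀ k, v k ∈ L) ∧ (∃ b : Basis (Fin 3) ℤ L, ∀ i : Fin 3, (b i : E) = v i.succ) ∧
    (∑ k, v k = 0)

/-- The functional minimized in Selling reduction. -/
noncomputable def Fval (v : Fin 4 → E) : ℝ := ∑ k, ‖v k‖ ^ 2

variable {L}

private lemma isUnitDet (M : Matrix (Fin 3) (Fin 3) ℤ) (h : M.det = 1 ∨ M.det = -1) :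
    IsUnit M.det := by
  rcases h with h | h <;> rw [h]
  · exact isUnit_one
  · exact isUnit_one.neg

omit [InnerProductSpace ℝ E] [FiniteDimensional ℝ E] in
theorem sb_basisChange (b : Basis (Fin 3) ℤ L) (M : Matrix (Fin 3) (Fin 3) ℤ)
    (hM : IsUnit M.det) :
    ∃ b' : Basis (Fin 3) ℤ L, ∀ i, (b' i : E) = ∑ j, M i j • (b j : E) := by
  have hT : IsUnit (Matrix.transpose M).det := by rwa [Matrix.det_transpose]
  refine ⟨b.map (Matrix.toLinearEquiv b (Matrix.transpose M) hT), fun i => ?_⟩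
  rw [Basis.map_apply, Matrix.toLinearEquiv_apply, Matrix.toLin_self]
  push_cast
  simp [Matrix.transpose_apply]

theorem sb_basis_of_rel {v w : Fin 4 → E}
    (hb : ∃ b : Basis (Fin 3) ℤ L, ∀ i : Fin 3, (b i : E) = v i.succ)
    (M : Matrix (Fin 3) (Fin 3) ℤ) (hM : IsUnit M.det)
    (h : ∀ i : Fin 3, w i.succ = ∑ j, M i j • v j.succ) :
    ∃ b' : Basis (Fin 3) ℤ L, ∀ i : Fin 3, (b' i : E) = w i.succ := by
  obtain ⟨b, hbv⟩ := hb
  obtain ⟨b', hb'⟩ := sb_basisChange b M hM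
  refine ⟨b', fun i => ?_⟩
  rw [hb' i, h i]
  exact Finset.sum_congr rfl fun j _ => by rw [hbv j]

theorem sb_swap {v : Fin 4 → E} (h : IsSb L v) (x y : Fin 4) :
    IsSb L (v ∘ Equiv.swap x y) := by
  obtain ⟨hmem, hb, hsum⟩ := h
  have h0 : v 0 = -(v 1 + v 2 + v 3) := by
    rw [Fin.sum_univ_four] at hsum
    rw [eq_neg_iff_add_eq_zero, ← hsum]; abel
  refine ⟨fun k => hmem _, ?_, ?_⟩
  swap
  · exact (Equiv.sum_comp (Equiv.swap x y) v).trans hsum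
  have key : ∀ M : Matrix (Fin 3) (Fin 3) ℤ, IsUnit M.det →
      (∀ i : Fin 3, (v ∘ Equiv.swap x y) i.succ = ∑ j, M i j • v j.succ) →
      ∃ b' : Basis (Fin 3) ℤ L, ∀ i : Fin 3, (b' i : E) = (v ∘ Equiv.swap x y) i.succ :=
    fun M hM hrel => sb_basis_of_rel hb M hM hrel
  have d1 : IsUnit (!![-1,-1,-1; 0,1,0; 0,0,1] : Matrix (Fin 3) (Fin 3) ℤ).det := by
    exact isUnitDet _ (by decide)
  have d2 : IsUnit (!![1,0,0; -1,-1,-1; 0,0,1] : Matrix (Fin 3) (Fin 3) ℤ).det := by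
    exact isUnitDet _ (by decide)
  have d3 : IsUnit (!![1,0,0; 0,1,0; -1,-1,-1] : Matrix (Fin 3) (Fin 3) ℤ).det := by
    exact isUnitDet _ (by decide)
  have d4 : IsUnit (!![0,1,0; 1,0,0; 0,0,1] : Matrix (Fin 3) (Fin 3) ℤ).det := by
    exact isUnitDet _ (by decide)
  have d5 : IsUnit (!![0,0,1; 0,1,0; 1,0,0] : Matrix (Fin 3) (Fin 3) ℤ).det := by
    exact isUnitDet _ (by decide)
  have d6 : IsUnit (!![1,0,0; 0,0,1; 0,1,0] : Matrix (Fin 3) (Fin 3) ℤ).det := by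
    exact isUnitDet _ (by decide)
  have did : IsUnit (!![1,0,0; 0,1,0; 0,0,1] : Matrix (Fin 3) (Fin 3) ℤ).det := by
    exact isUnitDet _ (by decide)
  fin_cases x <;> fin_cases y
  · exact key _ did (by intro i; fin_cases i <;>
      simp [Fin.sum_univ_three, Equiv.swap_apply_def, h0] <;> module)
  · exact key _ d1 (by intro i; fin_cases i <;>
      simp [Fin.sum_univ_three, Equiv.swap_apply_def, h0] <;> module)
  · exact key _ d2 (by intro i; fin_cases i <;>
      simp [Fin.sum_univ_three, Equiv.swap_apply_def, h0] <;> module)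
  · exact key _ d3 (by intro i; fin_cases i <;>
      simp [Fin.sum_univ_three, Equiv.swap_apply_def, h0] <;> module)
  · exact key _ d1 (by intro i; fin_cases i <;>
      simp [Fin.sum_univ_three, Equiv.swap_apply_def, h0] <;> module)
  · exact key _ did (by intro i; fin_cases i <;>
      simp [Fin.sum_univ_three, Equiv.swap_apply_def, h0] <;> module)
  · exact key _ d4 (by intro i; fin_cases i <;>
      simp [Fin.sum_univ_three, Equiv.swap_apply_def, h0] <;> module)
  · exact key _ d5 (by intro i; fin_cases i <;>
      simp [Fin.sum_univ_three, Equiv.swap_apply_def, h0] <;> module)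
  · exact key _ d2 (by intro i; fin_cases i <;>
      simp [Fin.sum_univ_three, Equiv.swap_apply_def, h0] <;> module)
  · exact key _ d4 (by intro i; fin_cases i <;>
      simp [Fin.sum_univ_three, Equiv.swap_apply_def, h0] <;> module)
  · exact key _ did (by intro i; fin_cases i <;>
      simp [Fin.sum_univ_three, Equiv.swap_apply_def, h0] <;> module)
  · exact key _ d6 (by intro i; fin_cases i <;>
      simp [Fin.sum_univ_three, Equiv.swap_apply_def, h0] <;> module)
  · exact key _ d3 (by intro i; fin_cases i <;>
      simp [Fin.sum_univ_three, Equiv.swap_apply_def, h0] <;> module)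
  · exact key _ d5 (by intro i; fin_cases i <;>
      simp [Fin.sum_univ_three, Equiv.swap_apply_def, h0] <;> module)
  · exact key _ d6 (by intro i; fin_cases i <;>
      simp [Fin.sum_univ_three, Equiv.swap_apply_def, h0] <;> module)
  · exact key _ did (by intro i; fin_cases i <;>
      simp [Fin.sum_univ_three, Equiv.swap_apply_def, h0] <;> module)

theorem sb_perm {v : Fin 4 → E} (h : IsSb L v) (σ : Equiv.Perm (Fin 4)) :
    IsSb L (v ∘ σ) := by
  have main : ∀ σ : Equiv.Perm (Fin 4), ∀ w : Fin 4 → E, IsSb L w → IsSb L (w ∘ σ) := by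
    intro σ
    refine Equiv.Perm.swap_induction_on σ (fun w hw => by simpa using hw) ?_
    intro τ x y hxy ih w hw
    exact ih (w ∘ Equiv.swap x y) (sb_swap hw x y)
  exact main σ v h

theorem sb_step {v : Fin 4 → E} (h : IsSb L v)
    (hpos : 0 < (inner ℝ (v 2) (v 3) : ℝ)) :
    ∃ w : Fin 4 → E, IsSb L w ∧ Fval w < Fval v := by
  obtain ⟨hmem, hb, hsum⟩ := h
  have h0 : v 0 = -(v 1 + v 2 + v 3) := by
    rw [Fin.sum_univ_four] at hsum
    rw [eq_neg_iff_add_eq_zero, ← hsum]; abel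
  set w : Fin 4 → E := ![v 0 + v 2, v 1 + v 2, -(v 2), v 3] with hw
  have w0 : w 0 = v 0 + v 2 := rfl
  have w1 : w 1 = v 1 + v 2 := rfl
  have w2 : w 2 = -(v 2) := rfl
  have w3 : w 3 = v 3 := rfl
  refine ⟨w, ⟨?_, ?_, ?_⟩, ?_⟩
  · intro k
    fin_cases k
    · exact add_mem (hmem 0) (hmem 2)
    · exact add_mem (hmem 1) (hmem 2)
    · exact neg_mem (hmem 2)
    · exact hmem 3
  · refine sb_basis_of_rel hb !![1,1,0; 0,-1,0; 0,0,1]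
      (isUnitDet _ (by decide)) ?_
    intro i
    fin_cases i <;> simp [Fin.sum_univ_three, w1, w2, w3] <;> module
  · rw [Fin.sum_univ_four, w0, w1, w2, w3, ← hsum, Fin.sum_univ_four]
    abel
  · have hFw : Fval w = ‖v 0 + v 2‖ ^ 2 + ‖v 1 + v 2‖ ^ 2 + ‖v 2‖ ^ 2 + ‖v 3‖ ^ 2 := by
      rw [Fval, Fin.sum_univ_four, w0, w1, w2, w3, norm_neg]
    have hFv : Fval v = ‖v 0‖ ^ 2 + ‖v 1‖ ^ 2 + ‖v 2‖ ^ 2 + ‖v 3‖ ^ 2 := by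
      rw [Fval, Fin.sum_univ_four]
    rw [hFw, hFv, norm_add_sq_real, norm_add_sq_real]
    have e1 : (inner ℝ (v 0) (v 2) : ℝ)
        = -(inner ℝ (v 1) (v 2)) - ‖v 2‖ ^ 2 - inner ℝ (v 3) (v 2) := by
      rw [h0]
      simp only [inner_neg_left, inner_add_left, real_inner_self_eq_norm_sq]
      ring
    have e2 : (inner ℝ (v 3) (v 2) : ℝ) = inner ℝ (v 2) (v 3) := real_inner_comm _ _
    nlinarith [hpos]

end SellingAux

/-- Selling's theorem (§B.2.2): every euclidean lattice of rank 3 is of Voronoi's first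
kind, i.e. admits an obtuse superbase `(v₀, v₁, v₂, v₃)`: the vectors all lie in `L`,
`(v₁, v₂, v₃)` is a ℤ-basis of `L`, `v₀ + v₁ + v₂ + v₃ = 0`, and `⟨v_i, v_j⟩ ≤ 0` for all
`i ≠ j`. -/
theorem statement17 (E : Type*) [NormedAddCommGroup E] [InnerProductSpace ℝ E]
    [FiniteDimensional ℝ E] (hdim : Module.finrank ℝ E = 3)
    (L : Submodule ℤ E) [DiscreteTopology L] [IsZLattice ℝ L] :
    ∃ v : Fin 4 → E,
      (∀ k, v k ∈ L) ∧
      (∃ b : Basis (Fin 3) ℤ L, ∀ i : Fin 3, (b i : E) = v i.succ) ∧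
      (∑ k, v k = 0) ∧
      (∀ k l, k ≠ l → (inner ℝ (v k) (v l) : ℝ) ≤ 0) := by
  have hfree : Module.Free ℤ L := ZLattice.module_free ℝ L
  have hfinM : Module.Finite ℤ L := ZLattice.module_finite ℝ L
  have hrank : Module.finrank ℤ L = 3 := by rw [ZLattice.rank ℝ L, hdim]
  let b : Basis (Fin 3) ℤ L := (Module.finBasis ℤ L).reindex (finCongr hrank)
  set v₀ : Fin 4 → E := ![-((b 0 : E) + (b 1 : E) + (b 2 : E)), b 0, b 1, b 2] with hv₀
  have u0 : v₀ 0 = -((b 0 : E) + (b 1 : E) + (b 2 : E)) := rfl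
  have u1 : v₀ 1 = (b 0 : E) := rfl
  have u2 : v₀ 2 = (b 1 : E) := rfl
  have u3 : v₀ 3 = (b 2 : E) := rfl
  have hsb₀ : IsSb L v₀ := by
    refine ⟨?_, ⟨b, ?_⟩, ?_⟩
    · intro k
      fin_cases k
      · exact neg_mem (add_mem (add_mem (SetLike.coe_mem _) (SetLike.coe_mem _))
          (SetLike.coe_mem _))
      · exact SetLike.coe_mem _
      · exact SetLike.coe_mem _
      · exact SetLike.coe_mem _
    · intro i; fin_cases i
      · exact u1.symm
      · exact u2.symm
      · exact u3.symm
    · rw [Fin.sum_univ_four, u0, u1, u2, u3]; abel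
  set S : Set (Fin 4 → E) := {v | IsSb L v ∧ Fval v ≤ Fval v₀} with hS
  have hSne : S.Nonempty := ⟨v₀, hsb₀, le_refl _⟩
  have hF0 : 0 ≤ Fval v₀ := Finset.sum_nonneg fun k _ => sq_nonneg _
  have hfin : S.Finite := by
    set C : ℝ := Real.sqrt (Fval v₀) with hC
    set T : Set E := Metric.closedBall 0 C ∩ (L : Set E) with hT
    have hLclosed : IsClosed (L : Set E) := by
      have hd : DiscreteTopology L.toAddSubgroup := ‹DiscreteTopology L›
      have : IsClosed (L.toAddSubgroup : Set E) := AddSubgroup.isClosed_of_discrete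
      exact this
    have hTfin : T.Finite :=
      Metric.finite_isBounded_inter_isClosed
        (isDiscrete_iff_discreteTopology.mpr ‹DiscreteTopology L›) Metric.isBounded_closedBall hLclosed
    refine Set.Finite.subset (Set.Finite.pi fun _ : Fin 4 => hTfin) ?_
    rintro v ⟨⟨hmem, _, _⟩, hle⟩ k _
    have h1 : ‖v k‖ ^ 2 ≤ Fval v := by
      unfold Fval
      exact Finset.single_le_sum (fun i _ => sq_nonneg ‖v i‖) (Finset.mem_univ k)
    have h2 : ‖v k‖ ≤ C := by
      have hsq : ‖v k‖ ^ 2 ≤ Fval v₀ := le_trans h1 hle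
      have := Real.sqrt_le_sqrt hsq
      rwa [Real.sqrt_sq (norm_nonneg _)] at this
    exact ⟨by simpa [Metric.mem_closedBall, dist_eq_norm] using h2, hmem k⟩
  obtain ⟨v, hvS, hvmin⟩ := Set.exists_min_image S Fval hfin hSne
  obtain ⟨⟨hmem, hbas, hsum⟩, hvle⟩ := hvS
  refine ⟨v, hmem, hbas, hsum, ?_⟩
  by_contra hcon
  push_neg at hcon
  obtain ⟨k, l, hkl, hpos⟩ := hcon
  have hperm : ∀ k l : Fin 4, k ≠ l → ∃ σ : Equiv.Perm (Fin 4), σ 2 = k ∧ σ 3 = l := by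
    decide
  obtain ⟨σ, hσ2, hσ3⟩ := hperm k l hkl
  have hsb' : IsSb L (v ∘ σ) := sb_perm ⟨hmem, hbas, hsum⟩ σ
  have hpos' : 0 < (inner ℝ ((v ∘ σ) 2) ((v ∘ σ) 3) : ℝ) := by
    simp only [Function.comp_apply, hσ2, hσ3]; exact hpos
  obtain ⟨w, hw, hwlt⟩ := sb_step hsb' hpos'
  have hFeq : Fval (v ∘ σ) = Fval v := Equiv.sum_comp σ fun k => ‖v k‖ ^ 2
  have hwS : w ∈ S := ⟨hw, by rw [hFeq] at hwlt; linarith⟩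
  have := hvmin w hwS
  rw [hFeq] at hwlt
  linarith
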